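/- For the scalar ODE q̇ = -q(1 - 2/(1 + e^{‖q‖² - d²})) in ℝ² with d > 0, any solution with nonzero initial condition converges to the circle of radius d: if ‖q(t₀)‖ > 0 then ‖q(t)‖ → d as t → ∞. -/

import Mathlib

open Real Filter Set Topology

noncomputable def Tfn (u : ℝ) : ℝ := 1 - 2 / (1 + Real.exp u)

lemma Tfn_denom_pos (u : ℝ) : (0:ℝ) < 1 + Real.exp u := by positivity

lemma Tfn_mono : StrictMono Tfn := by
  intro u v huv
  unfold Tfn
  have h1 := Tfn_denom_pos u
  have h2 := Tfn_denom_pos v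
  have : 2 / (1 + Real.exp v) < 2 / (1 + Real.exp u) := by
    apply div_lt_div_of_pos_left (by norm_num) h1
    linarith [Real.exp_lt_exp.2 huv]
  linarith

lemma Tfn_zero : Tfn 0 = 0 := by
  unfold Tfn; rw [Real.exp_zero]; norm_num

lemma Tfn_odd (u : ℝ) : Tfn (-u) = - Tfn u := by
  unfold Tfn
  have h1 := (Tfn_denom_pos u).ne'
  have h2 := (Tfn_denom_pos (-u)).ne'
  rw [Real.exp_neg] at *
  have he := (Real.exp_pos u).ne'
  field_simp
  ring

lemma Tfn_pos {u : ℝ} (hu : 0 < u) : 0 < Tfn u := by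
  have := Tfn_mono hu; rwa [Tfn_zero] at this

lemma Tfn_neg {u : ℝ} (hu : u < 0) : Tfn u < 0 := by
  have := Tfn_mono hu; rwa [Tfn_zero] at this

lemma mul_Tfn_nonneg (u : ℝ) : 0 ≤ u * Tfn u := by
  rcases lt_trichotomy u 0 with h | h | h
  · exact le_of_lt (mul_pos_of_neg_of_neg h (Tfn_neg h))
  · simp [h]
  · exact le_of_lt (mul_pos h (Tfn_pos h))

lemma mul_Tfn_ge {u ε : ℝ} (hε : 0 < ε) (h : ε ≤ |u|) : ε * Tfn ε ≤ u * Tfn u := by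
  have key : u * Tfn u = |u| * Tfn |u| := by
    rcases abs_cases u with ⟨h1, _⟩ | ⟨h1, _⟩
    · rw [h1]
    · rw [h1, Tfn_odd]; ring
  rw [key]
  have hTε : 0 < Tfn ε := Tfn_pos hε
  have hT : Tfn ε ≤ Tfn |u| := (Tfn_mono.le_iff_le).2 h
  have := mul_le_mul h hT hTε.le (le_trans hε.le h)
  linarith

/-- Barrier lemma: if `g t₀ > m` and the derivative of `g` is positive whenever `g = m`
(for `t ≥ t₀`), then `g` stays above `m`. -/
lemma barrier {g f : ℝ → ℝ} (hg : ∀ t, HasDerivAt g (f t) t)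
    {t₀ m : ℝ} (h0 : m < g t₀)
    (hf : ∀ t, t₀ ≤ t → g t = m → 0 < f t) :
    ∀ t, t₀ ≤ t → m < g t := by
  have hcont : Continuous g := by
    rw [continuous_iff_continuousAt]; exact fun t => (hg t).continuousAt
  by_contra hc
  push_neg at hc
  obtain ⟨t₁, ht₁, hle⟩ := hc
  set S : Set ℝ := {t | t₀ ≤ t ∧ g t ≤ m} with hS
  have hne : S.Nonempty := ⟨t₁, ht₁, hle⟩
  have hbdd : BddBelow S := ⟨t₀, fun t ht => ht.1⟩
  have hSclosed : IsClosed S := by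
    have : S = Ici t₀ ∩ g ⁻¹' Iic m := by ext t; simp [hS, Set.mem_setOf_eq]
    rw [this]
    exact isClosed_Ici.inter (isClosed_Iic.preimage hcont)
  set s := sInf S with hsdef
  have hsS : s ∈ S := hSclosed.csInf_mem hne hbdd
  have hst₀ : t₀ ≤ s := hsS.1
  have hst₀' : t₀ < s := lt_of_le_of_ne hst₀ (fun h => absurd hsS.2 (by rw [← h]; exact not_le.2 h0))
  have hbefore : ∀ t, t₀ ≤ t → t < s → m < g t := by
    intro t ht hts
    by_contra h
    exact absurd (csInf_le hbdd ⟨ht, le_of_not_gt h⟩) (not_le.2 hts)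
  have hgs : g s = m := by
    refine le_antisymm hsS.2 ?_
    have htend : Tendsto g (𝓝[<] s) (𝓝 (g s)) :=
      (hcont.tendsto s).mono_left nhdsWithin_le_nhds
    refine ge_of_tendsto htend ?_
    filter_upwards [Ioo_mem_nhdsLT_of_mem (⟨hst₀', le_refl s⟩ : s ∈ Ioc t₀ s)] with t ht
    exact (hbefore t ht.1.le ht.2).le
  have hfs : 0 < f s := hf s hst₀ hgs
  have hslope : Tendsto (slope g s) (𝓝[≠] s) (𝓝 (f s)) :=
    hasDerivAt_iff_tendsto_slope.mp (hg s)
  have hev : ∀ᶠ t in 𝓝[<] s, 0 < slope g s t := by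
    refine Eventually.filter_mono (nhdsWithin_mono s ?_) (hslope.eventually (lt_mem_nhds hfs))
    intro x hx
    exact ne_of_lt hx
  have hIoo : Ioo t₀ s ∈ 𝓝[<] s := Ioo_mem_nhdsLT_of_mem ⟨hst₀', le_refl s⟩
  obtain ⟨t, ht1, ht2⟩ := (hev.and (eventually_of_mem hIoo (fun x hx => hx))).exists
  have hts : t - s < 0 := sub_neg.2 ht2.2
  rw [slope_def_field, div_pos_iff] at ht1
  have : g t - g s < 0 := by
    rcases ht1 with ⟨_, h⟩ | ⟨h, _⟩
    · linarith
    · exact h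
  rw [hgs] at this
  exact absurd (hbefore t ht2.1.le ht2.2) (not_lt.2 (by linarith))

/-- Any nonzero solution of `q̇ = -q(1 - 2/(1 + e^{‖q‖² - d²}))` in ℝ²
converges in norm to the circle of radius `d`. -/
theorem swarm_aggregation_convergence
    (d : ℝ) (hd : 0 < d)
    (q : ℝ → EuclideanSpace ℝ (Fin 2))
    (hode : ∀ t : ℝ,
      HasDerivAt q (-(1 - 2 / (1 + Real.exp (‖q t‖ ^ 2 - d ^ 2))) • q t) t)
    (t₀ : ℝ) (h0 : 0 < ‖q t₀‖) :
    Tendsto (fun t => ‖q t‖) atTop (nhds d) := by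
  set g : ℝ → ℝ := fun t => ‖q t‖ ^ 2 with hgdef
  set c : ℝ → ℝ := fun t => -(1 - 2 / (1 + Real.exp (‖q t‖ ^ 2 - d ^ 2))) with hcdef
  have hgnn : ∀ t, 0 ≤ g t := fun t => by
    show (0:ℝ) ≤ ‖q t‖ ^ 2; positivity
  have hct : ∀ t, c t = - Tfn (g t - d ^ 2) := fun t => rfl
  -- derivative of g
  have hg : ∀ t, HasDerivAt g (2 * (c t * g t)) t := by
    intro t
    have hq : HasDerivAt q (c t • q t) t := hode t
    have h1 := HasDerivAt.inner ℝ hq hq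
    have heq : (fun s => (inner ℝ (q s) (q s) : ℝ)) = g := by
      funext s
      rw [real_inner_self_eq_norm_sq]
    rw [heq] at h1
    convert h1 using 1
    case e'_4 => rfl
    case e'_5 => rfl
    rw [real_inner_smul_right, real_inner_smul_left, real_inner_self_eq_norm_sq]
    show 2 * (c t * g t) = c t * g t + c t * g t
    ring
  -- derivative of the Lyapunov function
  have hh : ∀ t, HasDerivAt (fun s => (g s - d ^ 2) ^ 2)
      (2 * (g t - d ^ 2) * (2 * (c t * g t))) t := by
    intro t
    have := ((hg t).sub_const (d ^ 2)).pow 2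
    convert this using 1
    case e'_4 => rfl
    case e'_5 => rfl
    case e'_8 => rfl
    push_cast
    ring
  have hder_nonpos : ∀ t, 2 * (g t - d ^ 2) * (2 * (c t * g t)) ≤ 0 := by
    intro t
    rw [hct t]
    nlinarith [mul_Tfn_nonneg (g t - d ^ 2), hgnn t]
  have hant : Antitone (fun s => (g s - d ^ 2) ^ 2) :=
    antitone_of_deriv_nonpos (fun t => (hh t).differentiableAt)
      (fun t => by rw [(hh t).deriv]; exact hder_nonpos t)
  have hg0 : 0 < g t₀ := by show (0:ℝ) < ‖q t₀‖ ^ 2; positivity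
  have hd2 : 0 < d ^ 2 := by positivity
  set m : ℝ := min (g t₀) (d ^ 2) / 2 with hmdef
  set M : ℝ := max (g t₀) (d ^ 2) + 1 with hMdef
  have hm : 0 < m := by
    have := lt_min hg0 hd2
    rw [hmdef]; linarith
  have hmd : m < d ^ 2 := by
    have : min (g t₀) (d ^ 2) ≤ d ^ 2 := min_le_right _ _
    rw [hmdef]; linarith
  have hmg : m < g t₀ := by
    have : min (g t₀) (d ^ 2) ≤ g t₀ := min_le_left _ _
    rw [hmdef]; linarith
  have hMd : d ^ 2 < M := by
    have : d ^ 2 ≤ max (g t₀) (d ^ 2) := le_max_right _ _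
    rw [hMdef]; linarith
  have hMg : g t₀ < M := by
    have : g t₀ ≤ max (g t₀) (d ^ 2) := le_max_left _ _
    rw [hMdef]; linarith
  have hlow : ∀ t, t₀ ≤ t → m < g t := by
    refine barrier hg hmg ?_
    intro t ht hgt
    have hT := Tfn_neg (show g t - d ^ 2 < 0 by rw [hgt]; linarith)
    rw [hct t]
    nlinarith [hgt ▸ hm]
  have hup : ∀ t, t₀ ≤ t → g t < M := by
    have hb := barrier (g := fun t => -(g t)) (f := fun t => -(2 * (c t * g t)))
      (fun t => (hg t).neg) (t₀ := t₀) (m := -M) (by simpa using hMg) ?_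
    · intro t ht
      have h := hb t ht
      linarith
    · intro t ht hgt
      have hgM : g t = M := by linarith [neg_eq_iff_eq_neg.mp hgt]
      have hT := Tfn_pos (show (0:ℝ) < g t - d ^ 2 by rw [hgM]; linarith)
      show 0 < -(2 * (c t * g t))
      rw [hct t]
      nlinarith [hgM ▸ (lt_trans hd2 hMd)]
  -- key claim: g gets within ε of d² at some time T ≥ t₀
  have key : ∀ ε : ℝ, 0 < ε → ∃ T, t₀ ≤ T ∧ |g T - d ^ 2| < ε := by
    intro ε hε
    by_contra hcon
    push_neg at hcon
    set δ : ℝ := 4 * m * (ε * Tfn ε) with hδdef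
    have hTε : 0 < Tfn ε := Tfn_pos hε
    have hδ : 0 < δ := by
      rw [hδdef]
      have := mul_pos hε hTε
      nlinarith
    have hlin : ∀ t : ℝ, HasDerivAt (fun s : ℝ => δ * s) δ t := fun t => by
      simpa using (hasDerivAt_id t).const_mul δ
    have hk : ∀ t, HasDerivAt (fun s => (g s - d ^ 2) ^ 2 + δ * s)
        (2 * (g t - d ^ 2) * (2 * (c t * g t)) + δ) t :=
      fun t => (hh t).add (hlin t)
    have hknonpos : ∀ t, t₀ ≤ t → 2 * (g t - d ^ 2) * (2 * (c t * g t)) + δ ≤ 0 := by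
      intro t ht
      have h1 := mul_Tfn_ge hε (hcon t ht)
      have h2 := hlow t ht
      rw [hct t, hδdef]
      nlinarith [mul_Tfn_nonneg (g t - d ^ 2), mul_pos hε hTε, hm]
    have hanti : AntitoneOn (fun s => (g s - d ^ 2) ^ 2 + δ * s) (Ici t₀) := by
      apply antitoneOn_of_deriv_nonpos (convex_Ici t₀)
      · apply Continuous.continuousOn
        rw [continuous_iff_continuousAt]
        exact fun t => (hk t).continuousAt
      · exact fun x _ => (hk x).differentiableAt.differentiableWithinAt
      · intro x hx
        rw [(hk x).deriv]
        exact hknonpos x (le_of_lt (by simpa [interior_Ici] using hx))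
    set t₁ : ℝ := t₀ + (g t₀ - d ^ 2) ^ 2 / δ + 1 with ht₁def
    have ht₁ : t₀ ≤ t₁ := by
      have : 0 ≤ (g t₀ - d ^ 2) ^ 2 / δ := by positivity
      rw [ht₁def]; linarith
    have hle := hanti (self_mem_Ici) (mem_Ici.2 ht₁) ht₁
    simp only at hle
    have hnn : 0 ≤ (g t₁ - d ^ 2) ^ 2 := sq_nonneg _
    have hfs : δ * ((g t₀ - d ^ 2) ^ 2 / δ + 1) = (g t₀ - d ^ 2) ^ 2 + δ := by
      field_simp
    rw [ht₁def] at hle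
    nlinarith
  -- conclude: g → d²
  have hgt : Tendsto g atTop (𝓝 (d ^ 2)) := by
    rw [Metric.tendsto_atTop]
    intro ε hε
    obtain ⟨T, hT, hTε⟩ := key ε hε
    refine ⟨T, fun t ht => ?_⟩
    rw [Real.dist_eq]
    have h3 := hant ht
    have h2 : |g t - d ^ 2| ≤ |g T - d ^ 2| := by
      calc |g t - d ^ 2| = Real.sqrt ((g t - d ^ 2) ^ 2) := (Real.sqrt_sq_eq_abs _).symm
        _ ≤ Real.sqrt ((g T - d ^ 2) ^ 2) := Real.sqrt_le_sqrt h3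
        _ = |g T - d ^ 2| := Real.sqrt_sq_eq_abs _
    linarith
  have hsq : Tendsto (fun t => Real.sqrt (g t)) atTop (𝓝 (Real.sqrt (d ^ 2))) :=
    (Real.continuous_sqrt.tendsto _).comp hgt
  rw [Real.sqrt_sq hd.le] at hsq
  have heq : (fun t => Real.sqrt (g t)) = fun t => ‖q t‖ := by
    funext t
    exact Real.sqrt_sq (norm_nonneg _)
  rwa [heq] at hsq
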